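/- Let g be a metric Lie algebra with no non-zero abelian orthogonal factor (equivalently Z(g) ⊆ [g,g]). If f₁, f₂: g → g are linear maps each satisfying [fⱼ(X),Y] = fⱼ([X,Y]) for all X,Y ∈ g, and each fⱼ is either symmetric or skew-symmetric with respect to the inner product, then f₁ and f₂ commute: f₁∘f₂ = f₂∘f₁. -/
import Mathlib


open scoped RealInnerProductSpace TensorProduct

/-- A metric Lie algebra: a real Lie algebra equipped with a positive definite inner product. -/
class MetricLieAlgebra (g : Type*) [LieRing g] [LieAlgebra ℝ g] [Inner ℝ g] : Prop where
  inner_add_left : ∀ x y z : g, ⟪x + y, z⟫ = ⟪x, z⟫ + ⟪y, z⟫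
  inner_smul_left : ∀ (r : ℝ) (x y : g), ⟪r • x, y⟫ = r * ⟪x, y⟫
  inner_symm : ∀ x y : g, ⟪x, y⟫ = ⟪y, x⟫
  inner_self_pos : ∀ x : g, x ≠ 0 → 0 < ⟪x, x⟫

variable {g : Type*} [LieRing g] [LieAlgebra ℝ g] [Inner ℝ g]

/-- An orthogonal factor: an ideal admitting a complementary ideal orthogonal to it. -/
def IsOrthogonalFactor (h : LieIdeal ℝ g) : Prop :=
  ∃ h' : LieIdeal ℝ g, (∀ x ∈ h, ∀ y ∈ h', ⟪x, y⟫ = 0) ∧ h ⊔ h' = ⊤ ∧ h ⊓ h' = ⊥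

/-- An orthogonal projection of a metric Lie algebra. -/
def IsOrthogonalProjection (p : g →ₗ[ℝ] g) : Prop :=
  (∀ x y : g, p ⁅x, y⁆ = ⁅p x, p y⁆) ∧ p ∘ₗ p = p ∧
  (∀ x y : g, p ⁅x, y⁆ = ⁅p x, y⁆) ∧ ∀ x y : g, ⟪p x, y⟫ = ⟪x, p y⟫

/-- An orthogonal bi-invariant complex structure. -/
def IsOrthBiinvCplxStruct (J : g →ₗ[ℝ] g) : Prop :=
  (∀ x : g, J (J x) = -x) ∧ (∀ x y : g, J ⁅x, y⁆ = ⁅J x, y⁆) ∧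
    ∀ x y : g, ⟪J x, J y⟫ = ⟪x, y⟫

/-- Two (skew-)symmetric linear maps satisfying `[f(X),Y] = f([X,Y])` on a metric Lie
algebra with no non-zero abelian factor (i.e. `Z(g) ⊆ [g,g]`) commute. -/
theorem stmt4 (g : Type*) [LieRing g] [LieAlgebra ℝ g] [Inner ℝ g]
    [MetricLieAlgebra g] [Module.Finite ℝ g]
    (hZ : ∀ x : g, (∀ y : g, ⁅x, y⁆ = 0) →
      x ∈ ⁅(⊤ : LieIdeal ℝ g), (⊤ : LieIdeal ℝ g)⁆)
    (f₁ f₂ : g →ₗ[ℝ] g)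
    (hf₁ : ∀ x y : g, f₁ ⁅x, y⁆ = ⁅f₁ x, y⁆)
    (hf₂ : ∀ x y : g, f₂ ⁅x, y⁆ = ⁅f₂ x, y⁆)
    (hs₁ : (∀ x y : g, ⟪f₁ x, y⟫ = ⟪x, f₁ y⟫) ∨ (∀ x y : g, ⟪f₁ x, y⟫ = -⟪x, f₁ y⟫))
    (hs₂ : (∀ x y : g, ⟪f₂ x, y⟫ = ⟪x, f₂ y⟫) ∨ (∀ x y : g, ⟪f₂ x, y⟫ = -⟪x, f₂ y⟫)) :
    f₁ ∘ₗ f₂ = f₂ ∘ₗ f₁ := by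
  obtain ⟨hadd, hsmul, hsymm, hpos⟩ := ‹MetricLieAlgebra g›
  have hzero : ∀ x : g, ⟪(0 : g), x⟫ = 0 := fun x => by
    have h := hsmul 0 x x
    rwa [zero_smul, zero_mul] at h
  set c : g →ₗ[ℝ] g := f₁ ∘ₗ f₂ - f₂ ∘ₗ f₁ with hc
  have hcapp : ∀ x : g, c x = f₁ (f₂ x) - f₂ (f₁ x) := fun x => rfl
  -- the other invariance identity
  have hf₁' : ∀ x y : g, f₁ ⁅x, y⁆ = ⁅x, f₁ y⁆ := fun x y => by
    rw [← lie_skew x y, map_neg, hf₁ y x]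
    exact lie_skew x (f₁ y)
  have hf₂' : ∀ x y : g, f₂ ⁅x, y⁆ = ⁅x, f₂ y⁆ := fun x y => by
    rw [← lie_skew x y, map_neg, hf₂ y x]
    exact lie_skew x (f₂ y)
  -- c kills brackets
  have hbr : ∀ x y : g, c ⁅x, y⁆ = 0 := fun x y => by
    rw [hcapp, hf₂ x y, hf₁' (f₂ x) y, hf₁' x y, hf₂ x (f₁ y), sub_self]
  -- c x is central
  have hcx : ∀ x y : g, ⁅c x, y⁆ = 0 := fun x y => by
    have h : ⁅c x, y⁆ = c ⁅x, y⁆ := by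
      rw [hcapp, hcapp, sub_lie, hf₂ x y, hf₁ (f₂ x) y, hf₁ x y, hf₂ (f₁ x) y]
    rw [h, hbr]
  -- hence c ∘ c = 0
  have hcc : ∀ x : g, c (c x) = 0 := fun x => by
    have hmem := hZ (c x) (hcx x)
    rw [← LieSubmodule.mem_toSubmodule, LieSubmodule.lieIdeal_oper_eq_linear_span']
      at hmem
    refine Submodule.span_induction ?_ ?_ ?_ ?_ hmem
    · rintro m ⟨a, -, b, -, rfl⟩; exact hbr a b
    · exact map_zero c
    · intro a b _ _ ha hb; rw [map_add, ha, hb, add_zero]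
    · intro t a _ ha; rw [map_smul, ha, smul_zero]
  -- signs
  obtain ⟨e₁, he₁⟩ : ∃ e : ℝ, ∀ x y : g, ⟪f₁ x, y⟫ = e * ⟪x, f₁ y⟫ := by
    rcases hs₁ with h | h
    · exact ⟨1, fun x y => by rw [h]; ring⟩
    · exact ⟨-1, fun x y => by rw [h]; ring⟩
  obtain ⟨e₂, he₂⟩ : ∃ e : ℝ, ∀ x y : g, ⟪f₂ x, y⟫ = e * ⟪x, f₂ y⟫ := by
    rcases hs₂ with h | h
    · exact ⟨1, fun x y => by rw [h]; ring⟩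
    · exact ⟨-1, fun x y => by rw [h]; ring⟩
  have hsub : ∀ x y z : g, ⟪x - y, z⟫ = ⟪x, z⟫ - ⟪y, z⟫ := fun x y z => by
    have h := hadd x (-y) z
    have h2 := hsmul (-1) y z
    rw [neg_one_smul] at h2
    rw [sub_eq_add_neg x y, h, h2]; ring
  -- adjoint of c
  have hadj : ∀ x y : g, ⟪c x, y⟫ = -(e₁ * e₂) * ⟪x, c y⟫ := fun x y => by
    have hy : ⟪x, c y⟫ = ⟪f₁ (f₂ y), x⟫ - ⟪f₂ (f₁ y), x⟫ := by
      rw [hsymm x (c y), hcapp, hsub]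
    calc ⟪c x, y⟫ = ⟪f₁ (f₂ x), y⟫ - ⟪f₂ (f₁ x), y⟫ := by rw [hcapp, hsub]
      _ = e₁ * (e₂ * ⟪x, f₂ (f₁ y)⟫) - e₂ * (e₁ * ⟪x, f₁ (f₂ y)⟫) := by
          rw [he₁ (f₂ x) y, he₂ x (f₁ y), he₂ (f₁ x) y, he₁ x (f₂ y)]
      _ = e₁ * (e₂ * ⟪f₂ (f₁ y), x⟫) - e₂ * (e₁ * ⟪f₁ (f₂ y), x⟫) := by
          rw [hsymm x (f₂ (f₁ y)), hsymm x (f₁ (f₂ y))]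
      _ = -(e₁ * e₂) * (⟪f₁ (f₂ y), x⟫ - ⟪f₂ (f₁ y), x⟫) := by ring
      _ = -(e₁ * e₂) * ⟪x, c y⟫ := by rw [hy]
  have key : ∀ x : g, c x = 0 := by
    intro x
    by_contra hne
    have hp := hpos (c x) hne
    have h0 : ⟪c x, c x⟫ = 0 := by
      rw [hadj x (c x), hcc x, hsymm x 0, hzero, mul_zero]
    rw [h0] at hp
    exact lt_irrefl _ hp
  ext x
  have h := key x
  rw [hcapp, sub_eq_zero] at h
  simpa using h
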